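/- The center of a finitely generated finite-by-abelian group has finite index in the group. -/

import Mathlib

/-- A group is finite-by-abelian: it has a finite normal subgroup with abelian quotient. -/
def FiniteByAbelian (G : Type*) [Group G] : Prop :=
  ∃ N : Subgroup G, N.Normal ∧ Finite N ∧ ∀ a b : G, a * b * a⁻¹ * b⁻¹ ∈ N

lemma centralizer_finiteIndex_aux {G : Type*} [Group G] (N : Subgroup G) [Finite N]
    (hN : ∀ a b : G, a * b * a⁻¹ * b⁻¹ ∈ N) (s : G) :
    (Subgroup.centralizer (Subgroup.zpowers s : Set G)).FiniteIndex := by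
  set H := Subgroup.centralizer (Subgroup.zpowers s : Set G) with hH
  have hmem : ∀ g : G, Commute s g → g ∈ H := by
    intro g hg
    rw [hH, Subgroup.mem_centralizer_iff]
    rintro h ⟨n, rfl⟩
    exact hg.zpow_left n
  have hfin : Finite (G ⧸ H) := by
    have wd : ∀ a b : G, (QuotientGroup.leftRel H).r a b →
        (⟨a * s * a⁻¹ * s⁻¹, hN a s⟩ : N) = ⟨b * s * b⁻¹ * s⁻¹, hN b s⟩ := by
      intro a b hab
      have h1 : a⁻¹ * b ∈ H := (QuotientGroup.leftRel_apply).mp hab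
      have h2 : s * (a⁻¹ * b) = (a⁻¹ * b) * s := by
        rw [hH, Subgroup.mem_centralizer_iff] at h1
        exact h1 s ⟨1, by simp⟩
      have h2' : s * (a⁻¹ * b) = a⁻¹ * (b * s) := by simpa [mul_assoc] using h2
      have : a * s * a⁻¹ = b * s * b⁻¹ := by
        refine mul_right_cancel (b := b) ?_
        simp [mul_assoc, h2']
      simp [Subtype.ext_iff, this]
    apply Finite.of_injective
      (fun q : G ⧸ H => Quotient.liftOn' q (fun g => (⟨g * s * g⁻¹ * s⁻¹, hN g s⟩ : N)) wd)
    intro q1 q2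
    induction q1 using Quotient.inductionOn'
    induction q2 using Quotient.inductionOn'
    rename_i a b
    intro hab
    simp only [Quotient.liftOn'_mk'', Subtype.ext_iff] at hab
    have hco : a * s * a⁻¹ = b * s * b⁻¹ := by
      have := mul_right_cancel (b := s⁻¹) hab
      simpa using this
    have : Commute s (a⁻¹ * b) := by
      show s * (a⁻¹ * b) = (a⁻¹ * b) * s
      simpa [mul_assoc] using congrArg (fun x => a⁻¹ * x * b) hco
    exact Quotient.sound' ((QuotientGroup.leftRel_apply).mpr (hmem _ this))
  exact Subgroup.finiteIndex_of_finite_quotient (H := H)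

/-- The center of a finitely generated finite-by-abelian group has finite index. -/
theorem center_finiteIndex_of_fg_finiteByAbelian
    (G : Type) [Group G] (hfg : Group.FG G) (hG : FiniteByAbelian G) :
    (Subgroup.center G).FiniteIndex := by
  obtain ⟨N, -, hNfin, hN⟩ := hG
  obtain ⟨S, hS⟩ := hfg.1
  rw [Subgroup.center_eq_infi' (s := (S : Set G)) (by simpa using hS)]
  exact Subgroup.finiteIndex_iInf fun g =>
    have := centralizer_finiteIndex_aux N hN g
    Subgroup.finiteIndex_of_le
      (Subgroup.centralizer_le (s := {(g : G)}) (t := (Subgroup.zpowers (g : G) : Set G)) (by simp))
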